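/- Suppose A₃ ≠ 0. The functions H₁(u,v,w) = Q₂(w) - A₃·v (with Q₂' = P₂, deg P₂ ≥ 1) and H₂ as in the previous statement are functionally independent: their gradients are linearly independent on a dense open subset of ℝ³ (equivalently, off a set of Lebesgue measure zero). -/

import Mathlib

/-- with A₃ ≠ 0, H₁(u,v,w) = Q₂(w) - A₃·v (Q₂' = P₂, deg P₂ ≥ 1) and
H₂ as in Statement 11 are functionally independent: their gradients are linearly
independent on a dense open subset of ℝ³. -/
theorem stmt12 (P₁ P₂ : Polynomial ℝ) (d₁ : ℕ) (hd₁ : P₁.natDegree = d₁) (hd₁' : 1 ≤ d₁)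
    (hd₂ : 1 ≤ P₂.natDegree) (A₃ : ℝ) (hA₃ : A₃ ≠ 0)
    (Q₂ : ℝ → ℝ) (hQ₂ : ∀ w : ℝ, HasDerivAt Q₂ (P₂.eval w) w)
    (ξ : ℕ → ℝ → ℝ) (hξ0 : ∀ w : ℝ, ξ 0 w = w)
    (hξ : ∀ j : ℕ, 1 ≤ j → j ≤ d₁ → ∀ w : ℝ, HasDerivAt (ξ j) (P₂.eval w * ξ (j - 1) w) w)
    (H₁ H₂ : ℝ × ℝ × ℝ → ℝ)
    (hH₁ : ∀ u v w : ℝ, H₁ (u, v, w) = Q₂ w - A₃ * v)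
    (hH₂ : ∀ u v w : ℝ, H₂ (u, v, w) = A₃ ^ (d₁ + 1) * u -
      ∑ j ∈ Finset.range (d₁ + 1),
        (-1 : ℝ) ^ j * A₃ ^ (d₁ - j) * ((Polynomial.derivative^[j] P₁).eval v) * ξ j w) :
    ∃ U : Set (ℝ × ℝ × ℝ), IsOpen U ∧ Dense U ∧
      ∀ q ∈ U, LinearIndependent ℝ ![fderiv ℝ H₁ q, fderiv ℝ H₂ q] := by
  -- differentiability of ξ j for j ≤ d₁
  have hξdiff : ∀ j ≤ d₁, Differentiable ℝ (ξ j) := by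
    intro j hj
    rcases Nat.eq_zero_or_pos j with h0 | h1
    · subst h0
      have : ξ 0 = fun w => w := funext hξ0
      rw [this]; exact differentiable_id
    · intro w; exact (hξ j h1 hj w).differentiableAt
  -- the part of H₂ depending only on (v,w)
  set g : ℝ × ℝ → ℝ := fun vw =>
    ∑ j ∈ Finset.range (d₁ + 1),
      (-1 : ℝ) ^ j * A₃ ^ (d₁ - j) * ((Polynomial.derivative^[j] P₁).eval vw.1) * ξ j vw.2
    with hg_def
  have hg : Differentiable ℝ g := by
    apply Differentiable.fun_sum
    intro j hj
    have hj' : j ≤ d₁ := Nat.lt_succ_iff.mp (Finset.mem_range.mp hj)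
    exact (((differentiable_const _).mul
      ((Polynomial.differentiable (Polynomial.derivative^[j] P₁)).comp differentiable_fst)).mul
      ((hξdiff j hj').comp differentiable_snd))
  have hH₂eq : H₂ = fun p : ℝ × ℝ × ℝ => A₃ ^ (d₁ + 1) * p.1 - g p.2 := by
    funext p
    obtain ⟨u, v, w⟩ := p
    exact hH₂ u v w
  have hH₁eq : H₁ = fun p : ℝ × ℝ × ℝ => Q₂ p.2.2 - A₃ * p.2.1 := by
    funext p
    obtain ⟨u, v, w⟩ := p
    exact hH₁ u v w
  refine ⟨Set.univ, isOpen_univ, dense_univ, fun q _ => ?_⟩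
  -- explicit derivatives
  set L₁ : (ℝ × ℝ × ℝ) →L[ℝ] ℝ :=
    P₂.eval q.2.2 •
        ((ContinuousLinearMap.snd ℝ ℝ ℝ).comp (ContinuousLinearMap.snd ℝ ℝ (ℝ × ℝ))) -
      A₃ • ((ContinuousLinearMap.fst ℝ ℝ ℝ).comp (ContinuousLinearMap.snd ℝ ℝ (ℝ × ℝ)))
    with hL₁def
  have hF₁ : HasFDerivAt H₁ L₁ q := by
    rw [hH₁eq]
    have h1 : HasFDerivAt (fun p : ℝ × ℝ × ℝ => Q₂ p.2.2)
        (P₂.eval q.2.2 •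
          ((ContinuousLinearMap.snd ℝ ℝ ℝ).comp (ContinuousLinearMap.snd ℝ ℝ (ℝ × ℝ)))) q := by
      exact (hQ₂ q.2.2).comp_hasFDerivAt q
        (((ContinuousLinearMap.snd ℝ ℝ ℝ).comp
          (ContinuousLinearMap.snd ℝ ℝ (ℝ × ℝ))).hasFDerivAt)
    have h2 : HasFDerivAt (fun p : ℝ × ℝ × ℝ => A₃ * p.2.1)
        (A₃ • ((ContinuousLinearMap.fst ℝ ℝ ℝ).comp (ContinuousLinearMap.snd ℝ ℝ (ℝ × ℝ)))) q := by
      have := (((ContinuousLinearMap.fst ℝ ℝ ℝ).comp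
        (ContinuousLinearMap.snd ℝ ℝ (ℝ × ℝ))).hasFDerivAt (x := q)).const_mul A₃
      simpa using this
    exact h1.sub h2
  set L₂ : (ℝ × ℝ × ℝ) →L[ℝ] ℝ :=
    A₃ ^ (d₁ + 1) • (ContinuousLinearMap.fst ℝ ℝ (ℝ × ℝ)) -
      (fderiv ℝ g q.2).comp (ContinuousLinearMap.snd ℝ ℝ (ℝ × ℝ))
    with hL₂def
  have hF₂ : HasFDerivAt H₂ L₂ q := by
    rw [hH₂eq]
    have h1 : HasFDerivAt (fun p : ℝ × ℝ × ℝ => A₃ ^ (d₁ + 1) * p.1)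
        (A₃ ^ (d₁ + 1) • (ContinuousLinearMap.fst ℝ ℝ (ℝ × ℝ))) q := by
      have := ((ContinuousLinearMap.fst ℝ ℝ (ℝ × ℝ)).hasFDerivAt (x := q)).const_mul
        (A₃ ^ (d₁ + 1))
      simpa using this
    have h2 : HasFDerivAt (fun p : ℝ × ℝ × ℝ => g p.2)
        ((fderiv ℝ g q.2).comp (ContinuousLinearMap.snd ℝ ℝ (ℝ × ℝ))) q :=
      ((hg q.2).hasFDerivAt).comp q ((ContinuousLinearMap.snd ℝ ℝ (ℝ × ℝ)).hasFDerivAt)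
    exact h1.sub h2
  rw [hF₁.fderiv, hF₂.fderiv]
  -- key evaluations
  have hL₁e₁ : L₁ ((1 : ℝ), (0 : ℝ), (0 : ℝ)) = 0 := by
    simp [hL₁def]
  have hL₁e₂ : L₁ ((0 : ℝ), (1 : ℝ), (0 : ℝ)) = -A₃ := by
    simp [hL₁def]
  have hL₂e₁ : L₂ ((1 : ℝ), (0 : ℝ), (0 : ℝ)) = A₃ ^ (d₁ + 1) := by
    simp [hL₂def]
    exact (fderiv ℝ g q.2).map_zero
  rw [LinearIndependent.pair_iff]
  intro s t hst
  have h1 := congrArg (fun L : (ℝ × ℝ × ℝ) →L[ℝ] ℝ => L ((1 : ℝ), (0 : ℝ), (0 : ℝ))) hst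
  have h2 := congrArg (fun L : (ℝ × ℝ × ℝ) →L[ℝ] ℝ => L ((0 : ℝ), (1 : ℝ), (0 : ℝ))) hst
  simp only [ContinuousLinearMap.add_apply, ContinuousLinearMap.coe_smul',
    Pi.smul_apply, smul_eq_mul, ContinuousLinearMap.zero_apply] at h1 h2
  rw [hL₁e₁, hL₂e₁] at h1
  rw [hL₁e₂] at h2
  have ht : t = 0 := by
    have : t * A₃ ^ (d₁ + 1) = 0 := by linarith
    rcases mul_eq_zero.mp this with h | h
    · exact h
    · exact absurd h (pow_ne_zero _ hA₃)
  subst ht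
  have hs : s * -A₃ = 0 := by simpa using h2
  rcases mul_eq_zero.mp hs with h | h
  · exact ⟨h, rfl⟩
  · exact absurd (neg_eq_zero.mp h) hA₃
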